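/- Jordan's 1871 criterion: a matrix A over an algebraically closed field is diagonalizable if and only if each eigenvalue λ of algebraic multiplicity μ is a root of multiplicity at least μ - 1 of every (n-1)×(n-1) minor of xI - A (equivalently (x-λ)^{μ-1} divides the gcd of the first minors of xI - A). -/

import Mathlib

set_option maxHeartbeats 1000000

open Polynomial

section AuxMinorAdjugate

lemma jordan_aux_emb_factor {m : ℕ} (f : Fin m ↪ Fin (m + 1)) :
    ∃ (i : Fin (m + 1)) (e : Equiv.Perm (Fin m)), ∀ x, f x = i.succAbove (e x) := by
  obtain ⟨i, hi⟩ : ∃ i : Fin (m + 1), i ∉ Finset.univ.image f := by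
    by_contra h
    push_neg at h
    have hsub : (Finset.univ : Finset (Fin (m + 1))) ⊆ Finset.univ.image f := fun x _ => h x
    have hcard := Finset.card_le_card hsub
    rw [Finset.card_image_of_injective _ f.injective] at hcard
    simp at hcard
  have hne : ∀ x, f x ≠ i := by
    intro x hx
    exact hi (Finset.mem_image.mpr ⟨x, Finset.mem_univ x, hx⟩)
  have hg : ∀ x, ∃ y, i.succAbove y = f x := fun x => Fin.exists_succAbove_eq (hne x)
  choose g hgspec using hg
  have hginj : Function.Injective g := fun a b hab =>
    f.injective (by rw [← hgspec a, ← hgspec b, hab])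
  exact ⟨i, Equiv.ofBijective g (Finite.injective_iff_bijective.mp hginj),
    fun x => (hgspec x).symm⟩

lemma jordan_aux_dvd_det_submatrix_perm {R : Type*} [CommRing R] {m : ℕ}
    (N : Matrix (Fin m) (Fin m) R) (e₁ e₂ : Equiv.Perm (Fin m)) {q : R}
    (h : q ∣ N.det) : q ∣ (N.submatrix e₁ e₂).det := by
  have : N.submatrix (⇑e₁) (⇑e₂) = ((N.submatrix id (⇑e₂)).submatrix (⇑e₁) id) := by
    simp [Matrix.submatrix_submatrix]
  rw [this, Matrix.det_permute, Matrix.det_permute']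
  exact Dvd.dvd.mul_left (Dvd.dvd.mul_left h _) _

lemma jordan_aux_dvd_minor_of_dvd_adjugate {R : Type*} [CommRing R] {m : ℕ}
    (M : Matrix (Fin (m + 1)) (Fin (m + 1)) R) {q : R}
    (h : ∀ i j, q ∣ M.adjugate i j) (f g : Fin m ↪ Fin (m + 1)) :
    q ∣ (M.submatrix f g).det := by
  obtain ⟨i, e₁, hf⟩ := jordan_aux_emb_factor f
  obtain ⟨j, e₂, hg⟩ := jordan_aux_emb_factor g
  have hM : M.submatrix (⇑f) (⇑g) = (M.submatrix i.succAbove j.succAbove).submatrix e₁ e₂ := by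
    ext a b
    simp [hf, hg]
  rw [hM]
  refine jordan_aux_dvd_det_submatrix_perm _ _ _ ?_
  have hadj := Matrix.adjugate_fin_succ_eq_det_submatrix M j i
  have h2 : q ∣ (-1 : R) ^ (↑i + ↑j : ℕ) * (M.submatrix i.succAbove j.succAbove).det :=
    hadj ▸ h j i
  exact (((isUnit_one.neg).pow _).dvd_mul_left).mp h2

lemma jordan_aux_dvd_adjugate_of_dvd_minor {R : Type*} [CommRing R] {m : ℕ}
    (M : Matrix (Fin (m + 1)) (Fin (m + 1)) R) {q : R}
    (h : ∀ f g : Fin m ↪ Fin (m + 1), q ∣ (M.submatrix f g).det) (i j : Fin (m + 1)) :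
    q ∣ M.adjugate i j := by
  rw [Matrix.adjugate_fin_succ_eq_det_submatrix]
  exact Dvd.dvd.mul_left (h (Fin.succAboveEmb j) (Fin.succAboveEmb i)) _

end AuxMinorAdjugate

section AuxForward

open Matrix

variable {K : Type*} [Field K] {n : ℕ}

lemma jordan_aux_charmatrix_conj (P : (Matrix (Fin n) (Fin n) K)ˣ)
    (B : Matrix (Fin n) (Fin n) K) :
    charmatrix (P.val * B * (P⁻¹).val) =
      (C : K →+* K[X]).mapMatrix P.val * charmatrix B * (C : K →+* K[X]).mapMatrix (P⁻¹).val := by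
  have h1 : (C : K →+* K[X]).mapMatrix P.val * (C : K →+* K[X]).mapMatrix (P⁻¹).val = 1 := by
    rw [← _root_.map_mul]
    norm_cast
    simp
  rw [charmatrix, charmatrix, mul_sub, sub_mul]
  congr 1
  · rw [mul_assoc, (Matrix.scalar_commute (X : K[X]) (fun r' => mul_comm _ _) _).eq,
      ← mul_assoc, h1, one_mul]
  · rw [← _root_.map_mul, ← _root_.map_mul]

lemma jordan_aux_charmatrix_diagonal (d : Fin n → K) :
    charmatrix (Matrix.diagonal d) = Matrix.diagonal (fun i => X - C (d i)) := by
  ext i j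
  by_cases h : i = j
  · subst h; simp
  · simp [h, Matrix.diagonal_apply_ne _ h]

lemma jordan_aux_charpoly_conj_diag (P : (Matrix (Fin n) (Fin n) K)ˣ) (d : Fin n → K) :
    (P.val * Matrix.diagonal d * (P⁻¹).val).charpoly = ∏ i, (X - C (d i)) := by
  have h1 : (C : K →+* K[X]).mapMatrix (P⁻¹).val * (C : K →+* K[X]).mapMatrix P.val = 1 := by
    rw [← _root_.map_mul]
    norm_cast
    simp
  rw [Matrix.charpoly, jordan_aux_charmatrix_conj, Matrix.det_mul, Matrix.det_mul, mul_comm,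
    ← mul_assoc, ← Matrix.det_mul, h1]
  simp [jordan_aux_charmatrix_diagonal, Matrix.det_diagonal]

open scoped Classical in
lemma jordan_aux_rootMult_prod (d : Fin n → K) (lam : K) :
    (∏ i, (X - C (d i))).rootMultiplicity lam
      = (Finset.univ.filter (fun i => d i = lam)).card := by
  have h1 : (∏ i, (X - C (d i))) = ((Finset.univ.val.map d).map (fun a => X - C a)).prod := by
    rw [Multiset.map_map]
    rfl
  rw [h1, ← Polynomial.count_roots, Polynomial.roots_multiset_prod_X_sub_C,
    Multiset.count_map, Finset.card, Finset.filter_val]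
  exact congrArg Multiset.card (Multiset.filter_congr (fun x _ => eq_comm))

open scoped Classical in
lemma jordan_aux_dvd_adjugate_diag (d : Fin n → K) (lam : K) (k l : Fin n) :
    (X - C lam) ^ ((Finset.univ.filter (fun i => d i = lam)).card - 1) ∣
      (charmatrix (Matrix.diagonal d)).adjugate k l := by
  rw [jordan_aux_charmatrix_diagonal, Matrix.adjugate_diagonal]
  by_cases hkl : k = l
  · subst hkl
    rw [Matrix.diagonal_apply_eq]
    set t := (Finset.univ.filter (fun i => d i = lam)).erase k with ht
    have hsub : t ⊆ Finset.univ.erase k := by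
      intro x hx
      rw [Finset.mem_erase] at hx ⊢
      exact ⟨hx.1, Finset.mem_univ x⟩
    have h2 : ∏ j ∈ t, (X - C (d j)) ∣ ∏ j ∈ Finset.univ.erase k, (X - C (d j)) :=
      Finset.prod_dvd_prod_of_subset _ _ _ hsub
    have h3 : ∏ j ∈ t, (X - C (d j)) = (X - C lam) ^ t.card := by
      rw [← Finset.prod_const]
      refine Finset.prod_congr rfl (fun x hx => ?_)
      rw [Finset.mem_erase, Finset.mem_filter] at hx
      rw [hx.2.2]
    have h4 : (Finset.univ.filter (fun i => d i = lam)).card - 1 ≤ t.card := by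
      by_cases hk : k ∈ Finset.univ.filter (fun i => d i = lam)
      · rw [ht, Finset.card_erase_of_mem hk]
      · rw [ht, Finset.erase_eq_of_notMem hk]
        omega
    exact dvd_trans (pow_dvd_pow _ h4) (h3 ▸ h2)
  · rw [Matrix.diagonal_apply_ne _ hkl]
    exact dvd_zero _

open scoped Classical in
lemma jordan_aux_dvd_adjugate_conj_diag (P : (Matrix (Fin n) (Fin n) K)ˣ) (d : Fin n → K)
    (lam : K) (i j : Fin n) :
    (X - C lam) ^ ((Finset.univ.filter (fun i => d i = lam)).card - 1) ∣
      (charmatrix (P.val * Matrix.diagonal d * (P⁻¹).val)).adjugate i j := by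
  rw [jordan_aux_charmatrix_conj, Matrix.adjugate_mul_distrib, Matrix.adjugate_mul_distrib]
  rw [Matrix.mul_apply]
  refine Finset.dvd_sum (fun l _ => ?_)
  rw [Matrix.mul_apply]
  rw [Finset.mul_sum]
  refine Finset.dvd_sum (fun k _ => ?_)
  exact ((jordan_aux_dvd_adjugate_diag d lam l k).mul_right _).mul_left _

open scoped Classical in
lemma jordan_aux_forward (P : (Matrix (Fin n) (Fin n) K)ˣ) (d : Fin n → K)
    (lam : K) (f g : Fin (n - 1) ↪ Fin n) :
    (X - C lam) ^ ((P.val * Matrix.diagonal d * (P⁻¹).val).charpoly.rootMultiplicity lam - 1) ∣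
      ((charmatrix (P.val * Matrix.diagonal d * (P⁻¹).val)).submatrix f g).det := by
  have hμ : (P.val * Matrix.diagonal d * (P⁻¹).val).charpoly.rootMultiplicity lam
      = (Finset.univ.filter (fun i => d i = lam)).card := by
    rw [jordan_aux_charpoly_conj_diag, jordan_aux_rootMult_prod]
  rw [hμ]
  cases n with
  | zero =>
    convert one_dvd _
    simp
  | succ m =>
    exact jordan_aux_dvd_minor_of_dvd_adjugate _
      (fun i j => jordan_aux_dvd_adjugate_conj_diag P d lam i j) f g

end AuxForward

section AuxReverse

open Matrix

lemma jordan_aux_diagonalizable_of_aeval_prod_roots {K : Type*} [Field K] [IsAlgClosed K] {n : ℕ}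
    (A : Matrix (Fin n) (Fin n) K) (s : Finset K)
    (h0 : aeval A (s.prod fun a => X - C a) = 0) :
    ∃ (P : (Matrix (Fin n) (Fin n) K)ˣ) (d : Fin n → K),
        A = P.val * Matrix.diagonal d * (P⁻¹).val := by
  classical
  set f : Module.End K (Fin n → K) := Matrix.toLinAlgEquiv' A with hf
  have hsq : Squarefree (s.prod fun a => X - C a) := by
    refine Polynomial.Separable.squarefree ?_
    rw [show (s.prod fun a => X - C a) = (∏ i ∈ s, (X - C (id i))) from rfl,
      Polynomial.separable_prod_X_sub_C_iff']
    exact fun x _ y _ hxy => hxy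
  have haev : aeval f (s.prod fun a => X - C a) = 0 := by
    rw [hf]
    have h3 := Polynomial.aeval_algHom_apply
      (Matrix.toLinAlgEquiv' : Matrix (Fin n) (Fin n) K ≃ₐ[K] _).toAlgHom A
      (s.prod fun a => X - C a)
    simpa [h0] using h3
  have hss : f.IsSemisimple := Module.End.isSemisimple_of_squarefree_aeval_eq_zero hsq haev
  have hfs := hss.isFinitelySemisimple
  have htop : ⨆ μ : K, f.eigenspace μ = ⊤ := by
    calc ⨆ μ : K, f.eigenspace μ = ⨆ μ : K, f.maxGenEigenspace μ :=
          iSup_congr fun μ => (hfs.maxGenEigenspace_eq_eigenspace μ).symm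
      _ = ⊤ := Module.End.iSup_maxGenEigenspace_eq_top f
  have hint : DirectSum.IsInternal f.eigenspace :=
    DirectSum.isInternal_submodule_of_iSupIndep_of_iSup_eq_top f.eigenspaces_iSupIndep htop
  let bs : ∀ μ : K, Module.Basis (Module.Basis.ofVectorSpaceIndex K (f.eigenspace μ)) K (f.eigenspace μ) :=
    fun μ => Module.Basis.ofVectorSpace K _
  let b0 := hint.collectedBasis bs
  haveI := FiniteDimensional.fintypeBasisIndex b0
  have hcard : Fintype.card ((μ : K) × Module.Basis.ofVectorSpaceIndex K (f.eigenspace μ)) = n := by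
    rw [← Module.finrank_eq_card_basis b0]
    simp
  let e := Fintype.equivFinOfCardEq hcard
  let b := b0.reindex e
  let d : Fin n → K := fun i => (e.symm i).1
  have heig : ∀ i, A.mulVec (b i) = d i • (b i) := by
    intro i
    have hmem : b i ∈ f.eigenspace (d i) := by
      rw [show b i = b0 (e.symm i) from b0.reindex_apply e i]
      exact hint.collectedBasis_mem bs (e.symm i)
    have h2 := Module.End.mem_eigenspace_iff.mp hmem
    rw [hf] at h2
    rwa [Matrix.toLinAlgEquiv'_apply] at h2
  let P0 : Matrix (Fin n) (Fin n) K := (Pi.basisFun K (Fin n)).toMatrix b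
  haveI : Invertible P0 := (Pi.basisFun K (Fin n)).invertibleToMatrix b
  refine ⟨unitOfInvertible P0, d, ?_⟩
  have hP0 : ∀ k j, P0 k j = b j k := fun k j => by
    simp [P0, Module.Basis.toMatrix_apply, Pi.basisFun_repr]
  have hmul : A * P0 = P0 * Matrix.diagonal d := by
    ext i j
    rw [Matrix.mul_apply, Matrix.mul_diagonal]
    calc ∑ k, A i k * P0 k j = A.mulVec (b j) i := by
          simp only [Matrix.mulVec, dotProduct, hP0]
      _ = (d j • (b j)) i := by rw [heig j]
      _ = P0 i j * d j := by simp [hP0, mul_comm]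
  show A = P0 * Matrix.diagonal d * ((unitOfInvertible P0)⁻¹).val
  have hinv : ((unitOfInvertible P0)⁻¹).val = ⅟P0 := rfl
  rw [hinv, ← hmul, mul_assoc, mul_invOf_self, mul_one]

open scoped Classical in
lemma jordan_aux_reverse_aeval {K : Type*} [Field K] [IsAlgClosed K] {m : ℕ}
    (A : Matrix (Fin (m + 1)) (Fin (m + 1)) K)
    (hadj : ∀ i j, (A.charpoly.roots.toFinset.prod
        (fun a => (X - C a) ^ (A.charpoly.rootMultiplicity a - 1))) ∣
          (charmatrix A).adjugate i j) :
    aeval A (A.charpoly.roots.toFinset.prod fun a => X - C a) = 0 := by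
  set s := A.charpoly.roots.toFinset with hs
  set dpol := s.prod (fun a => (X - C a) ^ (A.charpoly.rootMultiplicity a - 1)) with hdpol
  set p := s.prod (fun a => X - C a) with hp
  have hchne : A.charpoly ≠ 0 := A.charpoly_monic.ne_zero
  have hroot : ∀ a ∈ s, A.charpoly.IsRoot a := fun a ha => by
    rw [hs, Multiset.mem_toFinset] at ha
    exact Polynomial.isRoot_of_mem_roots ha
  choose Bf hB using hadj
  let B : Matrix (Fin (m + 1)) (Fin (m + 1)) K[X] := Matrix.of Bf
  have hBadj : (charmatrix A).adjugate = dpol • B := by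
    refine Matrix.ext fun i j => ?_
    rw [Matrix.smul_apply, smul_eq_mul]
    exact hB i j
  have hch : A.charpoly = dpol * p := by
    conv_lhs => rw [(IsAlgClosed.splits A.charpoly).eq_prod_roots_of_monic A.charpoly_monic]
    rw [Finset.prod_multiset_map_count, hdpol, hp, ← Finset.prod_mul_distrib]
    refine Finset.prod_congr rfl (fun a ha => ?_)
    rw [Polynomial.count_roots, ← pow_succ]
    congr 1
    have hpos : 0 < A.charpoly.rootMultiplicity a :=
      (Polynomial.rootMultiplicity_pos hchne).mpr (hroot a ha)
    omega
  have hdne : dpol ≠ 0 :=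
    (Polynomial.monic_prod_of_monic _ _ (fun a _ => (Polynomial.monic_X_sub_C a).pow _)).ne_zero
  have hkey : B * charmatrix A = p • (1 : Matrix (Fin (m + 1)) (Fin (m + 1)) K[X]) := by
    have hdet : (charmatrix A).det = A.charpoly := rfl
    have h1 : (charmatrix A).adjugate * charmatrix A = A.charpoly • 1 := by
      rw [Matrix.adjugate_mul, hdet]
    rw [hBadj, smul_mul_assoc, hch, mul_smul] at h1
    refine Matrix.ext fun i j => ?_
    have h2 := congrArg (fun M : Matrix (Fin (m + 1)) (Fin (m + 1)) K[X] => M i j) h1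
    simp only [Matrix.smul_apply, smul_eq_mul] at h2
    exact mul_left_cancel₀ hdne h2
  have h4 : p • (1 : Matrix (Fin (m + 1)) (Fin (m + 1)) K[X]) = B * charmatrix A := hkey.symm
  apply_fun matPolyEquiv at h4
  simp only [_root_.map_mul, Matrix.matPolyEquiv_charmatrix] at h4
  apply_fun (fun q => q.eval A) at h4
  rw [Polynomial.eval_mul_X_sub_C] at h4
  rw [matPolyEquiv_smul_one, Polynomial.eval_map] at h4
  exact h4

end AuxReverse

/-- Jordan's 1871 criterion: a matrix `A` over an algebraically closed field is
diagonalizable if and only if each eigenvalue `λ` of algebraic multiplicity `μ` is a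
root of multiplicity at least `μ - 1` of every `(n-1) × (n-1)` minor of `xI - A`
(equivalently `(x - λ)^(μ-1)` divides the gcd of the first minors). -/
theorem jordan_1871_criterion {K : Type*} [Field K] [IsAlgClosed K] {n : ℕ}
    (A : Matrix (Fin n) (Fin n) K) :
    (∃ (P : (Matrix (Fin n) (Fin n) K)ˣ) (d : Fin n → K),
        A = P.val * Matrix.diagonal d * (P⁻¹).val) ↔
      ∀ lam : K, A.charpoly.IsRoot lam →
        ∀ f g : Fin (n - 1) ↪ Fin n,
          (X - C lam) ^ (A.charpoly.rootMultiplicity lam - 1) ∣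
            ((Matrix.charmatrix A).submatrix f g).det := by
  constructor
  · rintro ⟨P, d, rfl⟩ lam _ f g
    exact jordan_aux_forward P d lam f g
  · intro h
    cases n with
    | zero => exact ⟨1, (fun _ => 0), Subsingleton.elim _ _⟩
    | succ m =>
      classical
      have hchne : A.charpoly ≠ 0 := A.charpoly_monic.ne_zero
      have hadj : ∀ i j, (A.charpoly.roots.toFinset.prod
          (fun a => (X - C a) ^ (A.charpoly.rootMultiplicity a - 1))) ∣
            (Matrix.charmatrix A).adjugate i j := by
        intro i j
        refine Finset.prod_dvd_of_coprime ?_ ?_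
        · intro a ha b hb hab
          exact (Polynomial.isCoprime_X_sub_C_of_isUnit_sub
            ((sub_ne_zero.mpr hab).isUnit)).pow
        · intro a ha
          refine jordan_aux_dvd_adjugate_of_dvd_minor _ (fun f g => ?_) i j
          exact h a (Polynomial.isRoot_of_mem_roots (Multiset.mem_toFinset.mp ha)) f g
      exact jordan_aux_diagonalizable_of_aeval_prod_roots A _ (jordan_aux_reverse_aeval A hadj)
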